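/- arXiv:0811.1733 — 7 statements merged into one kernel-verified Lean document; each statement's English description precedes it below -/
import Mathlib

section
/- For all nonnegative integers p, q, i, j, the generalized Eulerian number satisfies the closed formula A_{p,q}(i,j) = \sum_{t=0}^{i} (-1)^{i-t} · C(p+q+t+1, t) · C(p+q+i+j+2, i-t) · (p+1+t)^{i+j}, as an identity of integers, where C(n,k) denotes the binomial coefficient. -/
/-- The generalized Eulerian number `eulerA p q i j` counts the paths in the Euler graph
from `(p, q)` to `(p + i, q + j)`.  It is defined by the initial conditions
`eulerA p q i 0 = (q+1)^i`, `eulerA p q 0 j = (p+1)^j` and the recurrence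
`eulerA p q i j = (j+q+1) * eulerA p q (i-1) j + (i+p+1) * eulerA p q i (j-1)`. -/
def eulerA (p q : ℕ) : ℕ → ℕ → ℕ
  | i, 0 => (q + 1) ^ i
  | 0, j + 1 => (p + 1) ^ (j + 1)
  | i + 1, j + 1 =>
      (j + 1 + q + 1) * eulerA p q i (j + 1) + (i + 1 + p + 1) * eulerA p q (i + 1) j

/-- The auxiliary sum. -/
def Fs (p q n N e : ℕ) : ℤ :=
  ∑ t ∈ Finset.range (n + 1),
    (-1 : ℤ) ^ (n - t) * (p + q + t + 1).choose t * (N.choose (n - t)) *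
      ((p : ℤ) + 1 + t) ^ e

lemma choose_absorb (N k : ℕ) :
    ((k : ℤ) + 1) * N.choose (k + 1) = ((N : ℤ) - k) * N.choose k := by
  rcases le_or_gt (k + 1) N with h | h
  · have := Nat.choose_succ_right_eq N k
    have hc : ((N.choose (k+1) : ℤ) * (k+1) : ℤ) = (N.choose k : ℤ) * ((N:ℤ) - k) := by
      rw [show ((N:ℤ) - k) = ((N - k : ℕ) : ℤ) from by omega]
      exact_mod_cast this
    linarith
  · rcases le_or_gt N k with h2 | h2
    · rcases eq_or_lt_of_le h2 with rfl | h3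
      · simp [Nat.choose_eq_zero_of_lt (by omega : N < N + 1)]
      · rw [Nat.choose_eq_zero_of_lt h3, Nat.choose_eq_zero_of_lt (by omega)]
        simp
    · omega

lemma key_term (p q N e : ℕ) {t n : ℕ} (ht : t ≤ n) :
    (-1 : ℤ) ^ (n + 1 - t) * (p + q + t + 1).choose t * ((N + 1).choose (n + 1 - t)) *
        ((p : ℤ) + 1 + t) ^ (e + 1)
      = ((N : ℤ) - n - p - 1) *
          ((-1 : ℤ) ^ (n - t) * (p + q + t + 1).choose t * (N.choose (n - t)) *
            ((p : ℤ) + 1 + t) ^ e)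
        + ((n : ℤ) + p + 2) *
          ((-1 : ℤ) ^ (n + 1 - t) * (p + q + t + 1).choose t * (N.choose (n + 1 - t)) *
            ((p : ℤ) + 1 + t) ^ e) := by
  obtain ⟨k, rfl⟩ : ∃ k, n = t + k := ⟨n - t, by omega⟩
  rw [show t + k - t = k from by omega, show t + k + 1 - t = k + 1 from by omega]
  have habs := choose_absorb N k
  have hpas : (((N + 1).choose (k + 1) : ℕ) : ℤ) = (N.choose k : ℤ) + (N.choose (k + 1) : ℤ) := by
    exact_mod_cast Nat.choose_succ_succ N k
  rw [hpas]
  push_cast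
  linear_combination ((-1 : ℤ) ^ k * ((p + q + t + 1).choose t : ℤ) * ((p : ℤ) + 1 + t) ^ e) * habs

lemma Fs_rec (p q n e N : ℕ) :
    Fs p q (n + 1) (N + 1) (e + 1)
      = ((N : ℤ) - n - p - 1) * Fs p q n N e + ((n : ℤ) + p + 2) * Fs p q (n + 1) N e := by
  unfold Fs
  rw [Finset.mul_sum, Finset.mul_sum, Finset.sum_range_succ, Finset.sum_range_succ
    (f := fun t => ((n : ℤ) + p + 2) * ((-1 : ℤ) ^ (n + 1 - t) * (p + q + t + 1).choose t *
      (N.choose (n + 1 - t)) * ((p : ℤ) + 1 + t) ^ e))]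
  have hs : ∑ t ∈ Finset.range (n + 1),
      (-1 : ℤ) ^ (n + 1 - t) * (p + q + t + 1).choose t * ((N + 1).choose (n + 1 - t)) *
        ((p : ℤ) + 1 + t) ^ (e + 1)
      = ∑ t ∈ Finset.range (n + 1),
        (((N : ℤ) - n - p - 1) * ((-1 : ℤ) ^ (n - t) * (p + q + t + 1).choose t *
            (N.choose (n - t)) * ((p : ℤ) + 1 + t) ^ e)
          + ((n : ℤ) + p + 2) * ((-1 : ℤ) ^ (n + 1 - t) * (p + q + t + 1).choose t *
            (N.choose (n + 1 - t)) * ((p : ℤ) + 1 + t) ^ e)) := by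
    refine Finset.sum_congr rfl fun t htm => ?_
    exact key_term p q N e (by simpa [Nat.lt_succ_iff] using htm)
  rw [hs, Finset.sum_add_distrib]
  rw [show n + 1 - (n + 1) = 0 from by omega]
  simp only [Nat.choose_zero_right, Nat.cast_one, pow_zero]
  push_cast
  ring

lemma Fs_n_zero (p q N e : ℕ) : Fs p q 0 N e = ((p : ℤ) + 1) ^ e := by
  unfold Fs
  simp

lemma Fs_N_zero (p q n : ℕ) : Fs p q n 0 0 = ((p + q + n + 1).choose n : ℤ) := by
  unfold Fs
  rw [Finset.sum_eq_single n]
  · simp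
  · intro b hb hbn
    rw [Nat.choose_eq_zero_of_lt (show 0 < n - b by
      simp only [Finset.mem_range, Nat.lt_succ_iff] at hb; omega)]
    simp
  · intro h
    exact absurd (Finset.self_mem_range_succ n) h

lemma B_succ (p q n N : ℕ) :
    Fs p q (n + 1) (N + 1) 0 = Fs p q (n + 1) N 0 - Fs p q n N 0 := by
  unfold Fs
  rw [Finset.sum_range_succ, Finset.sum_range_succ
    (f := fun t => (-1 : ℤ) ^ (n + 1 - t) * (p + q + t + 1).choose t *
      (N.choose (n + 1 - t)) * ((p : ℤ) + 1 + t) ^ 0)]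
  have hs : ∑ t ∈ Finset.range (n + 1),
      (-1 : ℤ) ^ (n + 1 - t) * (p + q + t + 1).choose t * ((N + 1).choose (n + 1 - t)) *
        ((p : ℤ) + 1 + t) ^ 0
      = ∑ t ∈ Finset.range (n + 1),
        ((-1 : ℤ) ^ (n + 1 - t) * (p + q + t + 1).choose t * (N.choose (n + 1 - t)) *
            ((p : ℤ) + 1 + t) ^ 0
          - (-1 : ℤ) ^ (n - t) * (p + q + t + 1).choose t * (N.choose (n - t)) *
            ((p : ℤ) + 1 + t) ^ 0) := by
    refine Finset.sum_congr rfl fun t htm => ?_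
    have ht : t ≤ n := by simpa [Nat.lt_succ_iff] using htm
    obtain ⟨k, rfl⟩ : ∃ k, n = t + k := ⟨n - t, by omega⟩
    rw [show t + k - t = k from by omega, show t + k + 1 - t = k + 1 from by omega]
    have hpas : (((N + 1).choose (k + 1) : ℕ) : ℤ) = (N.choose k : ℤ) + (N.choose (k + 1) : ℤ) := by
      exact_mod_cast Nat.choose_succ_succ N k
    rw [hpas]
    ring
  rw [hs, Finset.sum_sub_distrib]
  rw [show n + 1 - (n + 1) = 0 from by omega]
  simp only [Nat.choose_zero_right, Nat.cast_one, pow_zero]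
  ring

lemma Bclosed (p q : ℕ) : ∀ N, N ≤ p + q + 2 → ∀ n, Fs p q n N 0 = ((p + q + 1 + n - N).choose n : ℤ) := by
  intro N
  induction N with
  | zero =>
    intro _ n
    rw [Fs_N_zero, show p + q + 1 + n - 0 = p + q + n + 1 from by omega]
  | succ N ih =>
    intro hN n
    match n with
    | 0 => simp [Fs_n_zero]
    | n + 1 =>
      rw [B_succ, ih (by omega) (n + 1), ih (by omega) n]
      rw [show p + q + 1 + (n + 1) - N = (p + q + 1 + n - N) + 1 from by omega,
          show p + q + 1 + (n + 1) - (N + 1) = p + q + 1 + n - N from by omega,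
          Nat.choose_succ_succ]
      push_cast
      ring

lemma Bzero (p q : ℕ) : ∀ d n, d + 1 ≤ n → Fs p q n (p + q + 2 + d) 0 = 0 := by
  intro d
  induction d with
  | zero =>
    intro n hn
    rw [show p + q + 2 + 0 = p + q + 2 from rfl, Bclosed p q (p + q + 2) le_rfl n,
        show p + q + 1 + n - (p + q + 2) = n - 1 from by omega,
        Nat.choose_eq_zero_of_lt (by omega)]
    simp
  | succ d ih =>
    intro n hn
    obtain ⟨n', rfl⟩ : ∃ n', n = n' + 1 := ⟨n - 1, by omega⟩
    rw [show p + q + 2 + (d + 1) = (p + q + 2 + d) + 1 from rfl, B_succ,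
        ih (n' + 1) (by omega), ih n' (by omega)]
    ring

lemma Fzero (p q : ℕ) : ∀ e n N, e < n → p + q + e + 2 ≤ N → N ≤ p + q + n + 1 →
    Fs p q n N e = 0 := by
  intro e
  induction e with
  | zero =>
    intro n N h1 h2 h3
    obtain ⟨d, rfl⟩ : ∃ d, N = p + q + 2 + d := ⟨N - (p + q + 2), by omega⟩
    exact Bzero p q d n (by omega)
  | succ e ih =>
    intro n N h1 h2 h3
    obtain ⟨n', rfl⟩ : ∃ n', n = n' + 1 := ⟨n - 1, by omega⟩
    obtain ⟨N', rfl⟩ : ∃ N', N = N' + 1 := ⟨N - 1, by omega⟩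
    rw [Fs_rec, ih n' N' (by omega) (by omega) (by omega),
        ih (n' + 1) N' (by omega) (by omega) (by omega)]
    ring

lemma Bse (p q : ℕ) : ∀ n, Fs p q n (p + q + n + 2) n = ((q : ℤ) + 1) ^ n := by
  intro n
  induction n with
  | zero => simp [Fs_n_zero]
  | succ n ih =>
    rw [show p + q + (n + 1) + 2 = (p + q + n + 2) + 1 from by omega,
        Fs_rec p q n n (p + q + n + 2), ih,
        Fzero p q n (n + 1) (p + q + n + 2) (by omega) (by omega) (by omega)]
    push_cast
    ring

theorem stmt0 (p q i j : ℕ) :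
    (eulerA p q i j : ℤ) =
      ∑ t ∈ Finset.range (i + 1),
        (-1 : ℤ) ^ (i - t) * (p + q + t + 1).choose t * (p + q + i + j + 2).choose (i - t) *
          ((p : ℤ) + 1 + t) ^ (i + j) := by
  have key : ∀ s i j, i + j = s → (eulerA p q i j : ℤ) = Fs p q i (p + q + i + j + 2) (i + j) := by
    intro s
    induction s with
    | zero =>
      intro i j h
      obtain rfl : i = 0 := by omega
      obtain rfl : j = 0 := by omega
      simp [eulerA, Fs_n_zero]
    | succ s ih =>
      intro i j h
      match i, j with
      | i, 0 =>
        have he : eulerA p q i 0 = (q + 1) ^ i := by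
          cases i <;> simp [eulerA]
        rw [he, show p + q + i + 0 + 2 = p + q + i + 2 from rfl, show i + 0 = i from rfl,
            Bse]
        push_cast
        ring
      | 0, j + 1 =>
        rw [show eulerA p q 0 (j + 1) = (p + 1) ^ (j + 1) from by simp [eulerA], Fs_n_zero]
        push_cast
        ring
      | i + 1, j + 1 =>
        rw [show eulerA p q (i + 1) (j + 1)
              = (j + 1 + q + 1) * eulerA p q i (j + 1) + (i + 1 + p + 1) * eulerA p q (i + 1) j
            from by rw [eulerA]]
        push_cast
        rw [ih i (j + 1) (by omega), ih (i + 1) j (by omega)]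
        rw [show p + q + (i + 1) + (j + 1) + 2 = (p + q + i + j + 3) + 1 from by omega,
            show (i + 1) + (j + 1) = (i + j + 1) + 1 from by omega,
            Fs_rec p q i (i + j + 1) (p + q + i + j + 3)]
        rw [show p + q + i + (j + 1) + 2 = p + q + i + j + 3 from by omega,
            show i + (j + 1) = i + j + 1 from by omega,
            show p + q + (i + 1) + j + 2 = p + q + i + j + 3 from by omega,
            show (i + 1) + j = i + j + 1 from by omega]
        push_cast
        ring
  rw [key (i + j) i j rfl]
  rfl
end

section
/- Fix nonnegative integers p, q, t, and for nonnegative integers i, j define the integer a_t(i,j) = (-1)^{i-t} · C(p+q+i+j+2, i-t) · (p+1+t)^{i+j} if t ≤ i, and a_t(i,j) = 0 if t > i, where C(n,k) denotes the binomial coefficient. Then for all integers i, j ≥ 1, a_t(i,j) = (j+q+1)·a_t(i-1,j) + (i+p+1)·a_t(i,j-1). -/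
theorem stmt1 (p q t : ℕ) (a : ℕ → ℕ → ℤ)
    (ha : ∀ i j : ℕ, a i j =
      if t ≤ i then
        (-1 : ℤ) ^ (i - t) * (p + q + i + j + 2).choose (i - t) * ((p : ℤ) + 1 + t) ^ (i + j)
      else 0) :
    ∀ i j : ℕ, 1 ≤ i → 1 ≤ j →
      a i j = ((j : ℤ) + q + 1) * a (i - 1) j + ((i : ℤ) + p + 1) * a i (j - 1) := by
  intro i j hi hj
  obtain ⟨i, rfl⟩ := Nat.exists_eq_succ_of_ne_zero (by omega : i ≠ 0)
  obtain ⟨j, rfl⟩ := Nat.exists_eq_succ_of_ne_zero (by omega : j ≠ 0)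
  simp only [Nat.succ_eq_add_one, ha, Nat.add_sub_cancel]
  by_cases h1 : t ≤ i
  · -- main case
    obtain ⟨m, rfl⟩ : ∃ m, i = t + m := ⟨i - t, by omega⟩
    rw [if_pos (by omega), if_pos (by omega), if_pos (by omega)]
    have e1 : t + m + 1 - t = m + 1 := by omega
    have e2 : t + m - t = m := by omega
    rw [e1, e2]
    have e3 : t + m + 1 + (j + 1) = (t + m + j + 1) + 1 := by ring
    have e4 : t + m + (j + 1) = t + m + j + 1 := by ring
    have e5 : t + m + 1 + j = t + m + j + 1 := by ring
    rw [e3, e4, e5]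
    have eN : p + q + (t + m + 1) + (j + 1) + 2 = (p + q + (t + m) + (j + 1) + 2) + 1 := by ring
    have eN2 : p + q + (t + m + 1) + j + 2 = p + q + (t + m) + (j + 1) + 2 := by ring
    rw [eN, eN2]
    set n := p + q + (t + m) + (j + 1) + 2 with hn
    have hA : ((n + 1).choose (m + 1) : ℤ) = n.choose m + n.choose (m + 1) := by
      rw [Nat.choose_succ_succ]; push_cast; ring
    have hB : (n.choose (m + 1) : ℤ) * (m + 1) = n.choose m * (p + q + j + t + 3) := by
      have := Nat.choose_succ_right_eq n m
      have hnm : n - m = p + q + j + t + 3 := by omega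
      rw [hnm] at this
      exact_mod_cast congrArg (Nat.cast : ℕ → ℤ) this
    rw [pow_succ ((p:ℤ)+1+↑t) (t+m+j+1), pow_succ (-1 : ℤ) m]
    set X := ((p:ℤ) + 1 + ↑t) ^ (t + m + j + 1) with hX
    set E := (-1 : ℤ) ^ m with hE
    push_cast at hB ⊢
    linear_combination (-((p:ℤ) + 1 + ↑t) * E * X) * hA + (E * X) * hB
  · by_cases h2 : t = i + 1
    · subst h2
      rw [if_pos le_rfl, if_neg (by omega), if_pos le_rfl]
      simp only [Nat.sub_self, pow_zero, Nat.choose_zero_right, Nat.cast_one, one_mul]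
      have e3 : i + 1 + (j + 1) = (i + 1 + j) + 1 := by ring
      rw [e3, pow_succ]
      push_cast
      ring
    · rw [if_neg (by omega), if_neg (by omega), if_neg (by omega)]
      simp
end

section
/- For all nonnegative integers p, q and every integer i ≥ 1, \sum_{t=0}^{i} (-1)^{i-t} · C(p+q+t+1, t) · C(p+q+i+2, i-t) · (p+1+t)^{i} = (q+1)^{i}, as an identity of integers, where C(n,k) denotes the binomial coefficient. -/
open Finset Polynomial

private lemma negpow (m s : ℕ) (h : s ≤ m) : (-1:ℤ)^(m-s) = (-1)^m * (-1)^s := by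
  have h1 := pow_add (-1:ℤ) (m-s) s
  rw [Nat.sub_add_cancel h] at h1
  have h2 : ((-1:ℤ)^s) * ((-1:ℤ)^s) = 1 := by
    rw [← pow_add, ← two_mul, pow_mul]
    norm_num
  calc (-1:ℤ)^(m-s) = (-1)^(m-s) * ((-1)^s * (-1)^s) := by rw [h2, mul_one]
    _ = ((-1)^(m-s) * (-1)^s) * (-1)^s := by ring
    _ = (-1)^m * (-1)^s := by rw [← h1]

private lemma BofZ (a : ℕ)
    (hZ : ∀ r : ℕ, ∑ s ∈ Finset.range (r+1),
      (-1:ℤ)^s * ((a+s).choose s) * (a.choose (r-s)) = (-1)^r) :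
    ∀ w : ℕ, ∑ s ∈ Finset.range (w+2),
      (-1:ℤ)^s * ((a+s).choose s) * ((a+1).choose (w+1-s)) = 0 := by
  intro w
  rw [Finset.sum_range_succ]
  have hsplit : ∀ s ∈ Finset.range (w+1),
      (-1:ℤ)^s * ((a+s).choose s) * ((a+1).choose (w+1-s))
      = (-1:ℤ)^s * ((a+s).choose s) * (a.choose (w+1-s))
        + (-1:ℤ)^s * ((a+s).choose s) * (a.choose (w-s)) := by
    intro s hs
    simp only [Finset.mem_range] at hs
    have h2 : w+1-s = (w-s)+1 := by omega
    rw [h2, Nat.choose_succ_succ a (w-s)]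
    push_cast
    ring
  rw [Finset.sum_congr rfl hsplit, Finset.sum_add_distrib]
  have e1 := hZ (w+1)
  rw [Finset.sum_range_succ] at e1
  have e2 := hZ w
  simp only [Nat.sub_self, Nat.choose_zero_right, Nat.choose_self] at e1 ⊢
  push_cast at e1 ⊢
  linear_combination e1 + e2

private lemma Zlem : ∀ a r : ℕ, ∑ s ∈ Finset.range (r+1),
    (-1:ℤ)^s * ((a+s).choose s) * (a.choose (r-s)) = (-1)^r := by
  intro a
  induction a with
  | zero =>
    intro r
    rw [Finset.sum_eq_single r]
    · simp
    · intro b hb hbr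
      simp only [Finset.mem_range] at hb
      have : (0:ℕ).choose (r-b) = 0 := Nat.choose_eq_zero_of_lt (by omega)
      simp [this]
    · intro h; exact absurd (Finset.self_mem_range_succ r) h
  | succ a ih =>
    have hB := BofZ a ih
    intro r
    induction r with
    | zero => simp
    | succ r ihr =>
      rw [Finset.sum_range_succ']
      have hsplit : ∀ s ∈ Finset.range (r+1),
          (-1:ℤ)^(s+1) * ((a+1+(s+1)).choose (s+1)) * ((a+1).choose (r+1-(s+1)))
          = -((-1:ℤ)^s * ((a+1+s).choose s) * ((a+1).choose (r-s)))
            - (-1:ℤ)^s * ((a+1+s).choose (s+1)) * ((a+1).choose (r-s)) := by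
        intro s hs
        have h1 : a+1+(s+1) = (a+1+s)+1 := by ring
        have h2 : r+1-(s+1) = r - s := by omega
        rw [h1, h2, Nat.choose_succ_succ (a+1+s) s]
        push_cast
        ring
      rw [Finset.sum_congr rfl hsplit]
      simp only [Finset.sum_sub_distrib, Finset.sum_neg_distrib]
      rw [ihr]
      have e3 := hB r
      rw [Finset.sum_range_succ'] at e3
      have align : ∀ s ∈ Finset.range (r+1),
          (-1:ℤ)^(s+1) * ((a+(s+1)).choose (s+1)) * ((a+1).choose (r+1-(s+1)))
          = -((-1:ℤ)^s * ((a+1+s).choose (s+1)) * ((a+1).choose (r-s))) := by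
        intro s hs
        have h2 : r+1-(s+1) = r - s := by omega
        have h4 : a+(s+1) = a+1+s := by ring
        rw [h2, h4]; push_cast; ring
      rw [Finset.sum_congr rfl align, Finset.sum_neg_distrib] at e3
      simp only [Nat.add_zero, Nat.choose_zero_right, Nat.sub_zero, pow_zero] at e3 ⊢
      push_cast at e3 ⊢
      linear_combination e3

private lemma keylem (a m : ℕ) : ∀ r : ℕ, ∑ s ∈ Finset.range (r+1),
    (-1:ℤ)^s * ((a+s).choose s) * ((a+m+1).choose (r-s)) = m.choose r := by
  induction m with
  | zero =>
    intro r
    match r with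
    | 0 => simp
    | (w+1) =>
      rw [BofZ a (Zlem a) w]
      simp
  | succ m ih =>
    intro r
    match r with
    | 0 => simp
    | (w+1) =>
      rw [Finset.sum_range_succ]
      have hsplit : ∀ s ∈ Finset.range (w+1),
          (-1:ℤ)^s * ((a+s).choose s) * ((a+(m+1)+1).choose (w+1-s))
          = (-1:ℤ)^s * ((a+s).choose s) * ((a+m+1).choose (w+1-s))
            + (-1:ℤ)^s * ((a+s).choose s) * ((a+m+1).choose (w-s)) := by
        intro s hs
        simp only [Finset.mem_range] at hs
        have h2 : w+1-s = (w-s)+1 := by omega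
        have h1 : a+(m+1)+1 = (a+m+1)+1 := by ring
        rw [h2, h1, Nat.choose_succ_succ (a+m+1) (w-s)]
        push_cast
        ring
      rw [Finset.sum_congr rfl hsplit, Finset.sum_add_distrib]
      have e1 := ih (w+1)
      rw [Finset.sum_range_succ] at e1
      have e2 := ih w
      have e4 : (m+1).choose (w+1) = m.choose w + m.choose (w+1) := Nat.choose_succ_succ m w
      simp only [Nat.sub_self, Nat.choose_zero_right, Nat.choose_self] at e1 ⊢
      push_cast [e4] at e1 ⊢
      linear_combination e1 + e2

private lemma choose_help (a k s : ℕ) :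
    (a+k+s).choose (k+s) * (k+s).choose k = (a+k).choose k * (a+k+s).choose s := by
  have hpos : 0 < a.factorial * (k.factorial * s.factorial) :=
    Nat.mul_pos a.factorial_pos (Nat.mul_pos k.factorial_pos s.factorial_pos)
  apply Nat.eq_of_mul_eq_mul_right hpos
  have A : (k+s).choose k * s.factorial * k.factorial = (k+s).factorial := by
    have := Nat.add_choose_mul_factorial_mul_factorial s k
    rwa [Nat.add_comm s k] at this
  have B : (a+k+s).choose (k+s) * a.factorial * (k+s).factorial = (a+k+s).factorial := by
    have := Nat.add_choose_mul_factorial_mul_factorial a (k+s)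
    rwa [← Nat.add_assoc] at this
  have C : (a+k).choose k * a.factorial * k.factorial = (a+k).factorial :=
    Nat.add_choose_mul_factorial_mul_factorial a k
  have D : (a+k+s).choose s * (a+k).factorial * s.factorial = (a+k+s).factorial :=
    Nat.add_choose_mul_factorial_mul_factorial (a+k) s
  calc (a+k+s).choose (k+s) * (k+s).choose k * (a.factorial * (k.factorial * s.factorial))
      = (a+k+s).choose (k+s) * a.factorial * ((k+s).choose k * s.factorial * k.factorial) := by
        ring
    _ = (a+k+s).choose (k+s) * a.factorial * (k+s).factorial := by rw [A]
    _ = (a+k+s).factorial := B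
    _ = (a+k+s).choose s * (a+k).factorial * s.factorial := D.symm
    _ = (a+k+s).choose s * ((a+k).choose k * a.factorial * k.factorial) * s.factorial := by
        rw [C]
    _ = (a+k).choose k * (a+k+s).choose s * (a.factorial * (k.factorial * s.factorial)) := by
        ring

private lemma degQ (D : ℕ) (P : Polynomial ℤ) (hP : P.natDegree ≤ D + 1) :
    (P.comp (X + 1) - P).natDegree ≤ D := by
  by_cases h0 : P.natDegree = 0
  · obtain ⟨c, rfl⟩ := Polynomial.natDegree_eq_zero.mp h0
    simp
  · have hP0 : P ≠ 0 := fun h => h0 (by simp [h])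
    have hq1 : (X + 1 : ℤ[X]).natDegree = 1 := by
      simpa using Polynomial.natDegree_X_add_C (1:ℤ)
    have hcompdeg : (P.comp (X + 1)).natDegree = P.natDegree := by
      rw [Polynomial.natDegree_comp, hq1, mul_one]
    have hlc : (P.comp (X + 1)).leadingCoeff = P.leadingCoeff := by
      rw [Polynomial.leadingCoeff_comp (by rw [hq1]; exact one_ne_zero)]
      have h1 : (X + 1 : ℤ[X]).leadingCoeff = 1 := by
        simpa using (Polynomial.monic_X_add_C (1:ℤ)).leadingCoeff
      rw [h1, one_pow, mul_one]
    have hcomp0 : P.comp (X + 1) ≠ 0 := by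
      intro h
      have : P.leadingCoeff ≠ 0 := Polynomial.leadingCoeff_ne_zero.mpr hP0
      rw [h, Polynomial.leadingCoeff_zero] at hlc
      exact this hlc.symm
    have hdeg : (P.comp (X + 1)).degree = P.degree := by
      rw [Polynomial.degree_eq_natDegree hcomp0, Polynomial.degree_eq_natDegree hP0, hcompdeg]
    by_cases hsub : P.comp (X + 1) - P = 0
    · rw [hsub]; simp
    · have hlt := Polynomial.degree_sub_lt hdeg hcomp0 hlc
      rw [hdeg] at hlt
      have := Polynomial.natDegree_lt_natDegree hsub hlt
      omega

private lemma NEG : ∀ (D : ℕ) (P : Polynomial ℤ), P.natDegree ≤ D → ∀ N : ℕ,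
    ∑ k ∈ Finset.range (D+1),
      (-1:ℤ)^k * ((N+k).choose k) * ((fwdDiff (1:ℤ))^[k] (fun x : ℤ => P.eval x)) 0
    = P.eval (-((N:ℤ)+1)) := by
  intro D
  induction D with
  | zero =>
    intro P hP N
    obtain ⟨c, rfl⟩ := Polynomial.natDegree_eq_zero.mp (Nat.le_zero.mp hP)
    simp
  | succ D ih =>
    intro P hP
    set Q := P.comp (X+1) - P with hQdef
    have hQ : Q.natDegree ≤ D := degQ D P hP
    have hfQ : fwdDiff (1:ℤ) (fun x : ℤ => P.eval x) = fun x : ℤ => Q.eval x := by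
      funext x
      simp [fwdDiff, hQdef, Polynomial.eval_comp]
    have hiter : ∀ k, (fwdDiff (1:ℤ))^[k+1] (fun x : ℤ => P.eval x)
        = (fwdDiff (1:ℤ))^[k] (fun x : ℤ => Q.eval x) := by
      intro k; rw [Function.iterate_succ_apply, hfQ]
    have hQeval : ∀ z : ℤ, Q.eval z = P.eval (z+1) - P.eval z := by
      intro z; simp [hQdef, Polynomial.eval_comp]
    intro N
    induction N with
    | zero =>
      rw [Finset.sum_range_succ']
      have e0 := ih Q hQ 0
      have align : ∀ k ∈ Finset.range (D+1),
          (-1:ℤ)^(k+1) * (((0:ℕ)+(k+1)).choose (k+1) : ℤ) *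
            ((fwdDiff (1:ℤ))^[k+1] (fun x : ℤ => P.eval x)) 0
          = -((-1:ℤ)^k * (((0:ℕ)+k).choose k : ℤ) *
              ((fwdDiff (1:ℤ))^[k] (fun x : ℤ => Q.eval x)) 0) := by
        intro k hk
        rw [hiter k]
        simp only [Nat.zero_add, Nat.choose_self, Nat.cast_one]
        ring
      rw [Finset.sum_congr rfl align, Finset.sum_neg_distrib, e0]
      have hq := hQeval (-((0:ℤ)+1))
      simp only [Function.iterate_zero, id_eq, pow_zero, Nat.add_zero, Nat.choose_self,
        Nat.cast_one, Nat.cast_zero] at hq ⊢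
      push_cast at hq ⊢
      linear_combination -hq
    | succ N ihN =>
      rw [Finset.sum_range_succ']
      have align : ∀ k ∈ Finset.range (D+1),
          (-1:ℤ)^(k+1) * (((N+1)+(k+1)).choose (k+1) : ℤ) *
            ((fwdDiff (1:ℤ))^[k+1] (fun x : ℤ => P.eval x)) 0
          = -((-1:ℤ)^k * (((N+1)+k).choose k : ℤ) *
              ((fwdDiff (1:ℤ))^[k] (fun x : ℤ => Q.eval x)) 0)
            + (-1:ℤ)^(k+1) * ((N+(k+1)).choose (k+1) : ℤ) *
              ((fwdDiff (1:ℤ))^[k+1] (fun x : ℤ => P.eval x)) 0 := by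
        intro k hk
        rw [hiter k]
        have hp : (N+1+(k+1)).choose (k+1) = (N+1+k).choose k + (N+(k+1)).choose (k+1) := by
          have h1 : N+1+(k+1) = (N+k+1)+1 := by ring
          have h2 : N+1+k = N+k+1 := by ring
          have h3 : N+(k+1) = N+k+1 := by ring
          rw [h1, h2, h3, Nat.choose_succ_succ (N+k+1) k]
        rw [hp]
        push_cast
        ring
      rw [Finset.sum_congr rfl align, Finset.sum_add_distrib, Finset.sum_neg_distrib]
      have e1 := ih Q hQ (N+1)
      rw [e1]
      have e2 := ihN
      rw [Finset.sum_range_succ'] at e2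
      have hq := hQeval (-((N:ℤ)+1+1))
      have harg : (-((N:ℤ)+1+1)+1) = -((N:ℤ)+1) := by ring
      rw [harg] at hq
      simp only [Function.iterate_zero, id_eq, pow_zero, Nat.add_zero, Nat.choose_zero_right,
        Nat.cast_one] at e2 hq ⊢
      push_cast at e2 hq ⊢
      linear_combination e2 - hq

private lemma innerSum2 (a i k : ℕ) (hk : k ≤ i) :
    ∑ t ∈ Finset.range (i+1),
      ((-1:ℤ)^(i-t) * ((a+t).choose t) * ((a+i+1).choose (i-t)) * (t.choose k))
    = (-1:ℤ)^(i-k) * ((a+k).choose k) := by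
  have hsub : Finset.Ico k (i+1) ⊆ Finset.range (i+1) := by
    intro x hx
    simp only [Finset.mem_Ico] at hx
    simp only [Finset.mem_range]
    omega
  have hvan : ∀ x ∈ Finset.range (i+1), x ∉ Finset.Ico k (i+1) →
      (-1:ℤ)^(i-x) * ((a+x).choose x) * ((a+i+1).choose (i-x)) * (x.choose k) = 0 := by
    intro x hx hx2
    simp only [Finset.mem_range] at hx
    simp only [Finset.mem_Ico] at hx2
    have : x.choose k = 0 := Nat.choose_eq_zero_of_lt (by omega)
    rw [this]
    simp
  rw [← Finset.sum_subset hsub hvan]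
  rw [Finset.sum_Ico_eq_sum_range]
  rw [show i+1-k = (i-k)+1 from by omega]
  have hterm : ∀ s ∈ Finset.range ((i-k)+1),
      (-1:ℤ)^(i-(k+s)) * ((a+(k+s)).choose (k+s)) * ((a+i+1).choose (i-(k+s))) * ((k+s).choose k)
      = ((-1:ℤ)^(i-k) * ((a+k).choose k))
        * ((-1:ℤ)^s * (((a+k)+s).choose s) * (((a+k)+(i-k)+1).choose ((i-k)-s))) := by
    intro s hs
    simp only [Finset.mem_range] at hs
    have h1 : i-(k+s) = (i-k)-s := by omega
    have h2 : a+i+1 = (a+k)+(i-k)+1 := by omega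
    have h3 : (-1:ℤ)^((i-k)-s) = (-1)^(i-k) * (-1)^s := negpow _ _ (by omega)
    have h4 : ((a+(k+s)).choose (k+s) : ℤ) * ((k+s).choose k)
        = ((a+k).choose k : ℤ) * (((a+k)+s).choose s) := by
      have h6 := choose_help a k s
      have h5 : a+(k+s) = a+k+s := by ring
      rw [h5]
      exact_mod_cast congrArg (Nat.cast (R := ℤ)) h6
    rw [h1, h2, h3]
    linear_combination
      ((-1:ℤ)^(i-k) * (-1)^s * ((((a+k)+(i-k)+1).choose ((i-k)-s) : ℤ))) * h4
  rw [Finset.sum_congr rfl hterm, ← Finset.mul_sum, keylem (a+k) (i-k) (i-k)]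
  simp

theorem stmt2 (p q i : ℕ) (hi : 1 ≤ i) :
    ∑ t ∈ Finset.range (i + 1),
        (-1 : ℤ) ^ (i - t) * (p + q + t + 1).choose t * (p + q + i + 2).choose (i - t) *
          ((p : ℤ) + 1 + t) ^ i
      = ((q : ℤ) + 1) ^ i := by
  have hdeg : ((X + Polynomial.C ((p:ℤ)+1))^i).natDegree ≤ i := by
    rw [Polynomial.natDegree_pow, Polynomial.natDegree_X_add_C, mul_one]
  have hfeval : ∀ x : ℤ, ((X + Polynomial.C ((p:ℤ)+1))^i).eval x = (x + ((p:ℤ)+1))^i := by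
    intro x; simp
  have hN : ∀ t ∈ Finset.range (i+1),
      ((X + Polynomial.C ((p:ℤ)+1))^i).eval (t:ℤ)
      = ∑ k ∈ Finset.range (i+1), ((t.choose k : ℤ) *
          ((fwdDiff (1:ℤ))^[k] (fun x : ℤ => ((X + Polynomial.C ((p:ℤ)+1))^i).eval x)) 0) := by
    intro t ht
    simp only [Finset.mem_range] at ht
    have h := shift_eq_sum_fwdDiff_iter (1:ℤ)
      (fun x : ℤ => ((X + Polynomial.C ((p:ℤ)+1))^i).eval x) t (0:ℤ)
    simp only [zero_add, nsmul_eq_mul, mul_one, smul_eq_mul] at h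
    rw [h]
    apply Finset.sum_subset
    · exact Finset.range_subset_range.mpr (by omega)
    · intro k hk1 hk2
      simp only [Finset.mem_range] at hk1 hk2
      rw [Nat.choose_eq_zero_of_lt (by omega)]
      simp
  calc ∑ t ∈ Finset.range (i + 1),
        (-1 : ℤ) ^ (i - t) * (p + q + t + 1).choose t * (p + q + i + 2).choose (i - t) *
          ((p : ℤ) + 1 + t) ^ i
      = ∑ t ∈ Finset.range (i+1), ∑ k ∈ Finset.range (i+1),
          (((-1:ℤ)^(i-t) * (((p+q+1)+t).choose t) * (((p+q+1)+i+1).choose (i-t)) * (t.choose k))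
            * ((fwdDiff (1:ℤ))^[k] (fun x : ℤ => ((X + Polynomial.C ((p:ℤ)+1))^i).eval x)) 0) := by
        apply Finset.sum_congr rfl
        intro t ht
        rw [show p+q+t+1 = (p+q+1)+t from by omega, show p+q+i+2 = (p+q+1)+i+1 from by omega]
        rw [show ((p:ℤ)+1+(t:ℤ))^i = ((X + Polynomial.C ((p:ℤ)+1))^i).eval (t:ℤ) from by
          rw [hfeval]; ring]
        rw [hN t ht, Finset.mul_sum]
        apply Finset.sum_congr rfl
        intro k hk
        ring
    _ = ∑ k ∈ Finset.range (i+1),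
          ((∑ t ∈ Finset.range (i+1),
            ((-1:ℤ)^(i-t) * (((p+q+1)+t).choose t) * (((p+q+1)+i+1).choose (i-t)) * (t.choose k)))
            * ((fwdDiff (1:ℤ))^[k] (fun x : ℤ => ((X + Polynomial.C ((p:ℤ)+1))^i).eval x)) 0) := by
        rw [Finset.sum_comm]
        apply Finset.sum_congr rfl
        intro k hk
        rw [Finset.sum_mul]
    _ = ∑ k ∈ Finset.range (i+1),
          ((-1:ℤ)^i * ((-1:ℤ)^k * (((p+q+1)+k).choose k)
            * ((fwdDiff (1:ℤ))^[k] (fun x : ℤ => ((X + Polynomial.C ((p:ℤ)+1))^i).eval x)) 0)) := by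
        apply Finset.sum_congr rfl
        intro k hk
        simp only [Finset.mem_range] at hk
        rw [innerSum2 (p+q+1) i k (by omega)]
        rw [negpow i k (by omega)]
        ring
    _ = (-1:ℤ)^i * ((X + Polynomial.C ((p:ℤ)+1))^i).eval (-(((p+q+1 : ℕ):ℤ)+1)) := by
        rw [← Finset.mul_sum, NEG i _ hdeg (p+q+1)]
    _ = ((q : ℤ) + 1) ^ i := by
        rw [hfeval]
        rw [show (-(((p+q+1 : ℕ):ℤ)+1) + ((p:ℤ)+1)) = -((q:ℤ)+1) from by push_cast; ring]
        rw [← mul_pow]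
        norm_num
end

section
/- For all nonnegative integers p, q, i, j, the generalized Eulerian number satisfies the closed formula A_{p,q}(i,j) = \sum_{t=0}^{j} (-1)^{j-t} · C(p+q+t+1, t) · C(p+q+i+j+2, j-t) · (q+1+t)^{i+j}, as an identity of integers, where C(n,k) denotes the binomial coefficient. -/
open Finset


private lemma fd : ∀ (k n : ℕ) (x : ℤ), k < n →
    ∑ t ∈ range (n+1), (-1:ℤ)^t * (n.choose t : ℤ) * (x + t)^k = 0 := by
  intro k
  induction k with
  | zero =>
    intro n x hn
    simp only [pow_zero, mul_one]
    exact Int.alternating_sum_range_choose_of_ne (by omega)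
  | succ k ihk =>
    intro n x hn
    obtain ⟨m, rfl⟩ : ∃ m, n = m + 1 := ⟨n-1, by omega⟩
    have split : ∀ t ∈ range (m+2), (-1:ℤ)^t * ((m+1).choose t : ℤ) * (x + t)^(k+1)
        = ((-1)^t * ((m+1).choose t) * (x+t)^k) * x
          + (-1)^t * (((m+1).choose t : ℤ) * t) * (x+t)^k := by
      intro t _; ring
    rw [Finset.sum_congr rfl split, Finset.sum_add_distrib, ← Finset.sum_mul,
      ihk (m+1) x (by omega), zero_mul, zero_add]
    rw [Finset.sum_range_succ']
    have hterm : ∀ i ∈ range (m+1), (-1:ℤ)^(i+1) * (((m+1).choose (i+1) : ℤ) * ((i:ℤ)+1)) * (x + ((i:ℤ)+1))^k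
        = (-((m:ℤ)+1)) * ((-1)^i * (m.choose i : ℤ) * ((x+1) + i)^k) := by
      intro i _
      have h := Nat.add_one_mul_choose_eq m i
      have h' : ((m+1).choose (i+1) : ℤ) * ((i:ℤ)+1) = ((m:ℤ)+1) * (m.choose i) := by
        exact_mod_cast h.symm
      rw [pow_succ]
      linear_combination (-((-1:ℤ))^i) * (x+1+(i:ℤ))^k * h'
    push_cast
    rw [Finset.sum_congr rfl hterm, ← Finset.mul_sum, ihk m (x+1) (by omega)]
    ring

private lemma chain (a t j : ℕ) (ht : t ≤ j + 1) :
    (a+t+1).choose t * (a+j+2).choose (j+1-t) = (a+j+2).choose (a+1) * (j+1).choose t := by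
  have h1 : (a+j+2).choose (j+1-t) = (a+j+2).choose (a+t+1) := by
    rw [← Nat.choose_symm (by omega : a+t+1 ≤ a+j+2)]
    congr 1
    omega
  have h2 : (a+t+1).choose t = (a+t+1).choose (a+1) := by
    rw [← Nat.choose_symm (by omega : a+1 ≤ a+t+1)]
    congr 1
    omega
  rw [h1, h2, mul_comm]
  have := Nat.choose_mul (n := a+j+2) (by omega : a+1 ≤ a+t+1)
  rw [this]
  congr 2 <;> omega

private lemma key (q t u c N : ℕ) (hN : N = q+t+u+1+c) :
    ((q:ℤ)+1+t) * ((N+1).choose (u+1) : ℤ)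
      = ((q:ℤ)+t+u+2) * (N.choose (u+1) : ℤ) - (c:ℤ) * (N.choose u : ℤ) := by
  have hp : (N+1).choose (u+1) = N.choose u + N.choose (u+1) := Nat.choose_succ_succ' N u
  have h2 : N.choose (u+1) * (u+1) = N.choose u * (q+t+c+1) := by
    have := Nat.choose_succ_right_eq N u
    rwa [show N - u = q+t+c+1 by omega] at this
  have h2' : (N.choose (u+1) : ℤ) * ((u:ℤ)+1) = (N.choose u : ℤ) * ((q:ℤ)+t+c+1) := by
    exact_mod_cast h2
  rw [hp]
  push_cast
  linear_combination -h2'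

private lemma sign_split {j t : ℕ} (h : t ≤ j) : ((-1:ℤ))^(j-t) = (-1)^j * (-1)^t := by
  have h1 : ((-1:ℤ))^t * (-1)^t = 1 := by
    rw [← pow_add, ← two_mul, pow_mul]; norm_num
  calc ((-1:ℤ))^(j-t) = (-1)^(j-t) * ((-1)^t * (-1)^t) := by rw [h1, mul_one]
    _ = ((-1)^(j-t) * (-1)^t) * (-1)^t := by ring
    _ = (-1)^j * (-1)^t := by rw [← pow_add, Nat.sub_add_cancel h]

private lemma base_j (p q : ℕ) : ∀ j : ℕ,
    ∑ t ∈ range (j+1), (-1:ℤ)^(j-t) * ((p+q+t+1).choose t : ℤ) *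
      ((p+q+j+2).choose (j-t) : ℤ) * ((q:ℤ)+1+t)^j = ((p:ℤ)+1)^j := by
  intro j
  induction j with
  | zero => simp
  | succ j ih =>
    simp only [show p+q+(j+1)+2 = (p+q+j+2)+1 from by omega]
    rw [Finset.sum_range_succ]
    have hA : ∑ t ∈ range (j+2), (-1:ℤ)^(j+1-t) * ((p+q+t+1).choose t : ℤ) *
        ((p+q+j+2).choose (j+1-t) : ℤ) * ((q:ℤ)+1+t)^j = 0 := by
      have hc : ∀ t ∈ range (j+2), (-1:ℤ)^(j+1-t) * ((p+q+t+1).choose t : ℤ) *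
          ((p+q+j+2).choose (j+1-t) : ℤ) * ((q:ℤ)+1+t)^j
          = ((-1:ℤ)^(j+1) * ((p+q+j+2).choose (p+q+1) : ℤ)) *
            ((-1:ℤ)^t * ((j+1).choose t : ℤ) * (((q:ℤ)+1)+t)^j) := by
        intro t ht
        have ht' : t ≤ j+1 := by have := Finset.mem_range.mp ht; omega
        have hch : ((p+q+t+1).choose t : ℤ) * ((p+q+j+2).choose (j+1-t) : ℤ)
            = ((p+q+j+2).choose (p+q+1) : ℤ) * ((j+1).choose t : ℤ) := by
          exact_mod_cast congrArg (Nat.cast : ℕ → ℤ) (chain (p+q) t j ht')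
        rw [sign_split ht']
        linear_combination ((-1:ℤ)^(j+1) * (-1:ℤ)^t * ((q:ℤ)+1+t)^j) * hch
      rw [Finset.sum_congr rfl hc, ← Finset.mul_sum, fd j (j+1) ((q:ℤ)+1) (by omega), mul_zero]
    rw [Finset.sum_range_succ] at hA
    have hmain : ∑ t ∈ range (j+1), (-1:ℤ)^(j+1-t) * ((p+q+t+1).choose t : ℤ) *
        (((p+q+j+2)+1).choose (j+1-t) : ℤ) * ((q:ℤ)+1+t)^(j+1)
        = ((q:ℤ)+j+2) * ∑ t ∈ range (j+1), (-1:ℤ)^(j+1-t) * ((p+q+t+1).choose t : ℤ) *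
            ((p+q+j+2).choose (j+1-t) : ℤ) * ((q:ℤ)+1+t)^j
          + ((p:ℤ)+1) * ∑ t ∈ range (j+1), (-1:ℤ)^(j-t) * ((p+q+t+1).choose t : ℤ) *
            ((p+q+j+2).choose (j-t) : ℤ) * ((q:ℤ)+1+t)^j := by
      rw [Finset.mul_sum, Finset.mul_sum, ← Finset.sum_add_distrib]
      apply Finset.sum_congr rfl
      intro t ht
      have htj : t ≤ j := by have := Finset.mem_range.mp ht; omega
      rw [show j+1-t = (j-t)+1 from by omega]
      have hk := key q t (j-t) (p+1) (p+q+j+2) (by omega)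
      rw [Nat.cast_sub htj] at hk
      push_cast at hk ⊢
      linear_combination ((-1:ℤ)^((j-t)+1) * ((p+q+t+1).choose t : ℤ) * ((q:ℤ)+1+t)^j) * hk
    rw [hmain, ih]
    simp only [Nat.sub_self, pow_zero, Nat.choose_zero_right, Nat.cast_one, one_mul, mul_one]
      at hA ⊢
    push_cast at hA ⊢
    linear_combination ((q:ℤ)+j+2) * hA

private lemma rec_step (p q i j : ℕ) :
    ((j:ℤ)+1+q+1) * (∑ t ∈ range (j+2), (-1:ℤ)^(j+1-t) * ((p+q+t+1).choose t : ℤ) *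
        ((p+q+i+j+3).choose (j+1-t) : ℤ) * ((q:ℤ)+1+t)^(i+j+1))
    + ((i:ℤ)+1+p+1) * (∑ t ∈ range (j+1), (-1:ℤ)^(j-t) * ((p+q+t+1).choose t : ℤ) *
        ((p+q+i+j+3).choose (j-t) : ℤ) * ((q:ℤ)+1+t)^(i+j+1))
    = ∑ t ∈ range (j+2), (-1:ℤ)^(j+1-t) * ((p+q+t+1).choose t : ℤ) *
        (((p+q+i+j+3)+1).choose (j+1-t) : ℤ) * ((q:ℤ)+1+t)^((i+j+1)+1) := by
  have hmain : ∑ t ∈ range (j+1), (-1:ℤ)^(j+1-t) * ((p+q+t+1).choose t : ℤ) *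
      (((p+q+i+j+3)+1).choose (j+1-t) : ℤ) * ((q:ℤ)+1+t)^((i+j+1)+1)
      = ((j:ℤ)+1+q+1) * ∑ t ∈ range (j+1), (-1:ℤ)^(j+1-t) * ((p+q+t+1).choose t : ℤ) *
          ((p+q+i+j+3).choose (j+1-t) : ℤ) * ((q:ℤ)+1+t)^(i+j+1)
        + ((i:ℤ)+1+p+1) * ∑ t ∈ range (j+1), (-1:ℤ)^(j-t) * ((p+q+t+1).choose t : ℤ) *
          ((p+q+i+j+3).choose (j-t) : ℤ) * ((q:ℤ)+1+t)^(i+j+1) := by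
    rw [Finset.mul_sum, Finset.mul_sum, ← Finset.sum_add_distrib]
    apply Finset.sum_congr rfl
    intro t ht
    have htj : t ≤ j := by have := Finset.mem_range.mp ht; omega
    rw [show j+1-t = (j-t)+1 from by omega]
    have hk := key q t (j-t) (i+p+2) (p+q+i+j+3) (by omega)
    rw [Nat.cast_sub htj] at hk
    push_cast at hk ⊢
    linear_combination ((-1:ℤ)^((j-t)+1) * ((p+q+t+1).choose t : ℤ) * ((q:ℤ)+1+t)^(i+j+1)) * hk
  conv_lhs => rw [Finset.sum_range_succ]
  conv_rhs => rw [Finset.sum_range_succ]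
  rw [hmain]
  simp only [Nat.sub_self, pow_zero, Nat.choose_zero_right, Nat.cast_one, one_mul, mul_one]
  push_cast
  ring

theorem stmt3 (p q i j : ℕ) :
    (eulerA p q i j : ℤ) =
      ∑ t ∈ Finset.range (j + 1),
        (-1 : ℤ) ^ (j - t) * (p + q + t + 1).choose t * (p + q + i + j + 2).choose (j - t) *
          ((q : ℤ) + 1 + t) ^ (i + j) := by
  induction i generalizing j with
  | zero =>
    cases j with
    | zero => simp [eulerA]
    | succ j =>
      have h := base_j p q (j+1)
      rw [show eulerA p q 0 (j+1) = (p+1)^(j+1) from by simp [eulerA]]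
      push_cast
      rw [show p+q+0+(j+1)+2 = p+q+(j+1)+2 from by omega, show 0+(j+1) = j+1 from by omega]
      exact h.symm
  | succ i ih =>
    induction j with
    | zero => simp [eulerA]
    | succ j ihj =>
      have e : (eulerA p q (i+1) (j+1) : ℤ)
          = ((j:ℤ)+1+q+1) * (eulerA p q i (j+1) : ℤ)
            + ((i:ℤ)+1+p+1) * (eulerA p q (i+1) j : ℤ) := by
        rw [show eulerA p q (i+1) (j+1)
          = (j+1+q+1) * eulerA p q i (j+1) + (i+1+p+1) * eulerA p q (i+1) j from by simp [eulerA]]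
        push_cast
        ring
      rw [e, ih (j+1), ihj]
      simp only [show p+q+i+(j+1)+2 = p+q+i+j+3 from by omega,
        show p+q+(i+1)+j+2 = p+q+i+j+3 from by omega,
        show p+q+(i+1)+(j+1)+2 = (p+q+i+j+3)+1 from by omega,
        show i+(j+1) = i+j+1 from by omega, show i+1+j = i+j+1 from by omega,
        show i+1+(j+1) = (i+j+1)+1 from by omega, show j+1+1 = j+2 from by omega]
      exact rec_step p q i j
end

section
/- For all nonnegative integers p, q, i, j, \sum_{t=0}^{i} (-1)^{i-t} · C(p+q+t+1, t) · C(p+q+i+j+2, i-t) · (p+1+t)^{i+j} = \sum_{t=0}^{j} (-1)^{j-t} · C(p+q+t+1, t) · C(p+q+i+j+2, j-t) · (q+1+t)^{i+j}, as an identity of integers, where C(n,k) denotes the binomial coefficient. -/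
/-- The main auxiliary sum. -/
def Lf (p q k n : ℕ) : ℤ :=
  ∑ t ∈ Finset.range (n + 1),
    (-1 : ℤ) ^ (n - t) * (p + q + t + 1).choose t * (p + q + k + 2).choose (n - t) *
      ((p : ℤ) + 1 + t) ^ k

lemma Lf_zero (p q k : ℕ) : Lf p q k 0 = ((p : ℤ) + 1) ^ k := by
  simp [Lf]

lemma key_choose (M s : ℕ) :
    ((s : ℤ) + 1) * (M.choose (s + 1)) = ((M : ℤ) - s) * (M.choose s) := by
  rcases Nat.lt_or_ge s M with h | h
  · have := Nat.choose_succ_right_eq M s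
    have h2 : ((M.choose (s+1) : ℤ) * (s+1)) = (M.choose s : ℤ) * ((M : ℤ) - s) := by
      have := congrArg (fun x : ℕ => (x : ℤ)) this
      push_cast [Nat.cast_sub h.le] at this
      push_cast
      linarith [this]
    linarith [h2]
  · rcases Nat.eq_or_lt_of_le h with h1 | h1
    · subst h1
      rw [Nat.choose_eq_zero_of_lt (by omega)]
      simp
    · rw [Nat.choose_eq_zero_of_lt (by omega), Nat.choose_eq_zero_of_lt h1]
      simp

lemma Lf_rec (p q k n : ℕ) :
    Lf p q (k + 1) (n + 1)
      = ((n : ℤ) + p + 2) * Lf p q k (n + 1) + ((k : ℤ) + q + 1 - n) * Lf p q k n := by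
  unfold Lf
  rw [Finset.sum_range_succ, Finset.sum_range_succ ((fun t =>
    (-1 : ℤ) ^ (n + 1 - t) * (p + q + t + 1).choose t * (p + q + k + 2).choose (n + 1 - t) *
      ((p : ℤ) + 1 + t) ^ k)) (n + 1)]
  rw [mul_add, Finset.mul_sum, Finset.mul_sum]
  have hsum : ∑ t ∈ Finset.range (n + 1),
      (-1 : ℤ) ^ (n + 1 - t) * (p + q + t + 1).choose t *
        (p + q + (k + 1) + 2).choose (n + 1 - t) * ((p : ℤ) + 1 + t) ^ (k + 1)
      = ∑ t ∈ Finset.range (n + 1),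
        (((n : ℤ) + p + 2) * ((-1 : ℤ) ^ (n + 1 - t) * (p + q + t + 1).choose t *
            (p + q + k + 2).choose (n + 1 - t) * ((p : ℤ) + 1 + t) ^ k)
          + ((k : ℤ) + q + 1 - n) * ((-1 : ℤ) ^ (n - t) * (p + q + t + 1).choose t *
            (p + q + k + 2).choose (n - t) * ((p : ℤ) + 1 + t) ^ k)) := by
    apply Finset.sum_congr rfl
    intro t ht
    have ht' : t ≤ n := by simpa [Nat.lt_succ_iff] using ht
    obtain ⟨s, rfl⟩ : ∃ s, n = t + s := ⟨n - t, by omega⟩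
    have h1 : t + s + 1 - t = s + 1 := by omega
    have h2 : t + s - t = s := by omega
    have h3 : p + q + (k + 1) + 2 = (p + q + k + 2) + 1 := by omega
    rw [h1, h2, h3, Nat.choose_succ_succ (p + q + k + 2) s]
    push_cast
    have hk := key_choose (p + q + k + 2) s
    push_cast at hk
    linear_combination ((-1 : ℤ) ^ s * ((p + q + t + 1).choose t : ℤ) *
      ((p : ℤ) + 1 + t) ^ k) * hk
  have hlast : (-1 : ℤ) ^ (n + 1 - (n + 1)) * (p + q + (n + 1) + 1).choose (n + 1) *
        (p + q + (k + 1) + 2).choose (n + 1 - (n + 1)) * ((p : ℤ) + 1 + (n + 1 : ℕ)) ^ (k + 1)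
      = ((n : ℤ) + p + 2) * ((-1 : ℤ) ^ (n + 1 - (n + 1)) * (p + q + (n + 1) + 1).choose (n + 1) *
        (p + q + k + 2).choose (n + 1 - (n + 1)) * ((p : ℤ) + 1 + (n + 1 : ℕ)) ^ k) := by
    simp only [Nat.sub_self, pow_zero, Nat.choose_zero_right, Nat.cast_one]
    push_cast
    ring
  rw [hsum, Finset.sum_add_distrib]
  push_cast at hlast ⊢
  linarith [hlast]

lemma G_lemma (A : ℕ) : ∀ B, B ≤ A + 1 → ∀ m,
    ∑ t ∈ Finset.range (m + 1), (-1 : ℤ) ^ (m - t) * (A + t).choose t * B.choose (m - t)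
      = (A + m - B).choose m := by
  intro B
  induction B with
  | zero =>
    intro _ m
    rw [Finset.sum_range_succ, Finset.sum_eq_zero]
    · simp
    · intro t ht
      have h : m - t ≠ 0 := by simp only [Finset.mem_range] at ht; omega
      obtain ⟨u, hu⟩ := Nat.exists_eq_succ_of_ne_zero h
      rw [hu]
      simp
  | succ B ih =>
    intro hB m
    match m with
    | 0 => simp
    | n + 1 =>
      have ih1 := ih (by omega) (n + 1)
      have ih0 := ih (by omega) n
      rw [Finset.sum_range_succ] at ih1 ⊢
      have e1 : ∑ t ∈ Finset.range (n + 1),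
          (-1 : ℤ) ^ (n + 1 - t) * (A + t).choose t * (B + 1).choose (n + 1 - t)
          = ∑ t ∈ Finset.range (n + 1),
            (-((-1 : ℤ) ^ (n - t) * (A + t).choose t * B.choose (n - t))
              + -((-1 : ℤ) ^ (n - t) * (A + t).choose t * B.choose (n + 1 - t))) := by
        apply Finset.sum_congr rfl
        intro t ht
        have ht' : t ≤ n := by simpa [Nat.lt_succ_iff] using ht
        have h1 : n + 1 - t = (n - t) + 1 := by omega
        rw [h1, Nat.choose_succ_succ' B (n - t), pow_succ]
        push_cast
        ring
      have e2 : ∑ t ∈ Finset.range (n + 1),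
          (-1 : ℤ) ^ (n + 1 - t) * (A + t).choose t * B.choose (n + 1 - t)
          = ∑ t ∈ Finset.range (n + 1),
            -((-1 : ℤ) ^ (n - t) * (A + t).choose t * B.choose (n + 1 - t)) := by
        apply Finset.sum_congr rfl
        intro t ht
        have ht' : t ≤ n := by simpa [Nat.lt_succ_iff] using ht
        have h1 : n + 1 - t = (n - t) + 1 := by omega
        rw [h1, pow_succ]
        ring
      rw [e1, Finset.sum_add_distrib]
      rw [e2] at ih1
      have h2 : A + (n + 1) - B = (A + n - B) + 1 := by omega
      have h3 : A + (n + 1) - (B + 1) = A + n - B := by omega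
      rw [h2] at ih1
      rw [h3]
      have hp : (((A + n - B) + 1).choose (n + 1) : ℤ)
          = ((A + n - B).choose n : ℤ) + ((A + n - B).choose (n + 1) : ℤ) := by
        rw [Nat.choose_succ_succ]; push_cast; ring
      rw [Finset.sum_neg_distrib, Finset.sum_neg_distrib] at *
      simp only [Nat.sub_self, Nat.choose_zero_right, pow_zero, Nat.cast_one, mul_one,
        one_mul] at ih1 ⊢
      linarith [ih0, ih1, hp]

lemma Lf_vanish (p q : ℕ) : ∀ k n, Lf p q k (k + 1 + n) = 0 := by
  intro k
  induction k with
  | zero =>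
    intro n
    rw [show 0 + 1 + n = n + 1 from by omega]
    unfold Lf
    have hG := G_lemma (p + q + 1) (p + q + 2) (le_refl _) (n + 1)
    rw [show p + q + 1 + (n + 1) - (p + q + 2) = n from by omega,
      Nat.choose_eq_zero_of_lt (by omega)] at hG
    push_cast at hG
    rw [← hG]
    apply Finset.sum_congr rfl
    intro t _
    rw [show p + q + t + 1 = p + q + 1 + t from by omega,
      show p + q + 0 + 2 = p + q + 2 from by omega]
    push_cast
    ring
  | succ k ih =>
    intro n
    rw [show k + 1 + 1 + n = (k + 1 + n) + 1 from by omega, Lf_rec]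
    have h1 := ih (n + 1)
    have h2 := ih n
    rw [show k + 1 + (n + 1) = k + 1 + n + 1 from by omega] at h1
    rw [h1, h2]
    ring

lemma Lf_symm (p q : ℕ) : ∀ k n, n ≤ k → Lf q p k n = Lf p q k (k - n) := by
  intro k
  induction k with
  | zero =>
    intro n hn
    have : n = 0 := by omega
    subst this
    rw [Nat.sub_zero, Lf_zero, Lf_zero]
    simp

  | succ k ih =>
    intro n hn
    match n with
    | 0 =>
      rw [Nat.sub_zero, Lf_zero, Lf_rec p q k k]
      have hv := Lf_vanish p q k 0
      rw [show k + 1 + 0 = k + 1 from by omega] at hv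
      rw [hv]
      have hk := ih 0 (Nat.zero_le k)
      rw [Nat.sub_zero] at hk
      rw [← hk, Lf_zero]
      push_cast
      ring
    | Nat.succ n' =>
      rcases Nat.lt_or_ge (n' + 1) (k + 1) with hlt | hge
      · have hn'k : n' + 1 ≤ k := by omega
        rw [Lf_rec q p k n', ih (n' + 1) hn'k, ih n' (by omega)]
        have hm : k + 1 - (n' + 1) = (k - n' - 1) + 1 := by omega
        rw [hm, Lf_rec p q k (k - n' - 1),
          show (k - n' - 1) + 1 = k - n' from by omega,
          show k - n' - 1 = k - (n' + 1) from by omega]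
        have hc : ((k - (n' + 1) : ℕ) : ℤ) = (k : ℤ) - n' - 1 := by omega
        linear_combination (Lf p q k (k - (n' + 1)) - Lf p q k (k - n')) * hc
      · have hk' : n' = k := by omega
        subst hk'
        rw [Lf_rec q p n' n', show n' + 1 - (n' + 1) = 0 from by omega, Lf_zero]
        have hv := Lf_vanish q p n' 0
        rw [show n' + 1 + 0 = n' + 1 from by omega] at hv
        rw [hv]
        have hk := ih n' (le_refl n')
        rw [Nat.sub_self, Lf_zero] at hk
        rw [hk]
        push_cast
        ring

theorem stmt4 (p q i j : ℕ) :
    ∑ t ∈ Finset.range (i + 1),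
        (-1 : ℤ) ^ (i - t) * (p + q + t + 1).choose t * (p + q + i + j + 2).choose (i - t) *
          ((p : ℤ) + 1 + t) ^ (i + j)
      = ∑ t ∈ Finset.range (j + 1),
          (-1 : ℤ) ^ (j - t) * (p + q + t + 1).choose t * (p + q + i + j + 2).choose (j - t) *
            ((q : ℤ) + 1 + t) ^ (i + j) := by
  have h1 : (∑ t ∈ Finset.range (i + 1),
      (-1 : ℤ) ^ (i - t) * (p + q + t + 1).choose t * (p + q + i + j + 2).choose (i - t) *
        ((p : ℤ) + 1 + t) ^ (i + j)) = Lf p q (i + j) i := by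
    unfold Lf
    rw [show p + q + (i + j) + 2 = p + q + i + j + 2 from by omega]
  have h2 : (∑ t ∈ Finset.range (j + 1),
      (-1 : ℤ) ^ (j - t) * (p + q + t + 1).choose t * (p + q + i + j + 2).choose (j - t) *
        ((q : ℤ) + 1 + t) ^ (i + j)) = Lf q p (i + j) j := by
    unfold Lf
    apply Finset.sum_congr rfl
    intro t _
    rw [show q + p + t + 1 = p + q + t + 1 from by omega,
      show q + p + (i + j) + 2 = p + q + i + j + 2 from by omega]
  rw [h1, h2, Lf_symm p q (i + j) j (by omega), show i + j - j = i from by omega]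
end

section
/- Let p, q be nonnegative integers and let a(i,j) and b(i,j) be positive real numbers defined for all nonnegative integers i, j with (i,j) ≠ (0,0), satisfying a(i,j) = (j+q+1)·a(i-1,j) + (i+p+1)·a(i,j-1) and b(i,j) = (j+q)·b(i-1,j) + (i+p+1)·b(i,j-1) for all i, j ≥ 1. Assume the initial conditions: a(0,j+1)/b(0,j+1) ≤ a(0,j)/b(0,j) for all j ≥ 1; a(0,1)/b(0,1) ≤ (q/(q+1))·a(1,0)/b(1,0); and a(i,0)/b(i,0) ≤ (q/(q+1))·a(i+1,0)/b(i+1,0) for all i ≥ 1. Then for all nonnegative integers i, j with (i,j) ≠ (0,0), a(i,j+1)/b(i,j+1) ≤ a(i,j)/b(i,j) ≤ ((q+j)/(q+1+j))·a(i+1,j)/b(i+1,j). -/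
theorem stmt5 (p q : ℕ) (a b : ℕ → ℕ → ℝ)
    (hapos : ∀ i j : ℕ, (i, j) ≠ (0, 0) → 0 < a i j)
    (hbpos : ∀ i j : ℕ, (i, j) ≠ (0, 0) → 0 < b i j)
    (ha : ∀ i j : ℕ, 1 ≤ i → 1 ≤ j →
      a i j = ((j : ℝ) + q + 1) * a (i - 1) j + ((i : ℝ) + p + 1) * a i (j - 1))
    (hb : ∀ i j : ℕ, 1 ≤ i → 1 ≤ j →
      b i j = ((j : ℝ) + q) * b (i - 1) j + ((i : ℝ) + p + 1) * b i (j - 1))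
    (hinit1 : ∀ j : ℕ, 1 ≤ j → a 0 (j + 1) / b 0 (j + 1) ≤ a 0 j / b 0 j)
    (hinit2 : a 0 1 / b 0 1 ≤ (q / (q + 1) : ℝ) * (a 1 0 / b 1 0))
    (hinit3 : ∀ i : ℕ, 1 ≤ i → a i 0 / b i 0 ≤ (q / (q + 1) : ℝ) * (a (i + 1) 0 / b (i + 1) 0)) :
    ∀ i j : ℕ, (i, j) ≠ (0, 0) →
      a i (j + 1) / b i (j + 1) ≤ a i j / b i j ∧
        a i j / b i j ≤ (((q : ℝ) + j) / ((q : ℝ) + 1 + j)) * (a (i + 1) j / b (i + 1) j) := by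
  have hne1 : ∀ i j : ℕ, ((i + 1 : ℕ), j) ≠ ((0 : ℕ), (0 : ℕ)) := by intro i j; simp
  have hne2 : ∀ i j : ℕ, (i, (j + 1 : ℕ)) ≠ ((0 : ℕ), (0 : ℕ)) := by intro i j; simp
  have hrnn : ∀ i j : ℕ, (i, j) ≠ (0, 0) → 0 ≤ a i j / b i j := fun i j h =>
    div_nonneg (hapos i j h).le (hbpos i j h).le
  have hcm : ∀ j : ℕ, ((q : ℝ) + j) / ((q : ℝ) + 1 + j)
      ≤ ((q : ℝ) + ((j + 1 : ℕ) : ℝ)) / ((q : ℝ) + 1 + ((j + 1 : ℕ) : ℝ)) := by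
    intro j
    have h1 : (0:ℝ) < (q : ℝ) + 1 + j := by positivity
    have h2 : (0:ℝ) < (q : ℝ) + 1 + ((j + 1 : ℕ) : ℝ) := by positivity
    rw [div_le_div_iff₀ h1 h2]; push_cast; nlinarith [sq_nonneg ((q:ℝ) + j)]
  have hC00 : a 0 1 / b 0 1
      ≤ (((q : ℝ) + ((1 : ℕ) : ℝ)) / ((q : ℝ) + 1 + ((1 : ℕ) : ℝ))) * (a 1 0 / b 1 0) := by
    refine hinit2.trans (mul_le_mul_of_nonneg_right ?_ (hrnn 1 0 (hne1 0 0)))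
    simpa using hcm 0
  have hCstep : ∀ i j : ℕ, (i, j) ≠ (0, 0) →
      a i (j + 1) / b i (j + 1) ≤ a i j / b i j →
      a i j / b i j ≤ (((q : ℝ) + j) / ((q : ℝ) + 1 + j)) * (a (i + 1) j / b (i + 1) j) →
      a i (j + 1) / b i (j + 1)
        ≤ (((q : ℝ) + ((j + 1 : ℕ) : ℝ)) / ((q : ℝ) + 1 + ((j + 1 : ℕ) : ℝ)))
          * (a (i + 1) j / b (i + 1) j) := by
    intro i j hne hA hB
    exact hA.trans (hB.trans (mul_le_mul_of_nonneg_right (hcm j) (hrnn (i+1) j (hne1 i j))))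
  have hEA : ∀ i j : ℕ,
      a i (j + 1) / b i (j + 1)
        ≤ (((q : ℝ) + ((j + 1 : ℕ) : ℝ)) / ((q : ℝ) + 1 + ((j + 1 : ℕ) : ℝ)))
          * (a (i + 1) j / b (i + 1) j) →
      a (i + 1) (j + 1) / b (i + 1) (j + 1) ≤ a (i + 1) j / b (i + 1) j := by
    intro i j hC
    have hb1 : 0 < b i (j + 1) := hbpos _ _ (hne2 i j)
    have hb2 : 0 < b (i + 1) j := hbpos _ _ (hne1 i j)
    have hb3 : 0 < b (i + 1) (j + 1) := hbpos _ _ (hne1 i (j + 1))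
    have hd : (0:ℝ) < ((q : ℝ) + 1 + ((j + 1 : ℕ) : ℝ)) * b (i + 1) j := by positivity
    rw [div_mul_div_comm, div_le_div_iff₀ hb1 hd] at hC
    rw [div_le_div_iff₀ hb3 hb2]
    have ea := ha (i + 1) (j + 1) (by omega) (by omega)
    have eb := hb (i + 1) (j + 1) (by omega) (by omega)
    simp only [Nat.add_sub_cancel] at ea eb
    rw [ea, eb]
    push_cast at hC ⊢
    nlinarith [hC]
  have hEB : ∀ i j : ℕ,
      a i (j + 1) / b i (j + 1)
        ≤ (((q : ℝ) + ((j + 1 : ℕ) : ℝ)) / ((q : ℝ) + 1 + ((j + 1 : ℕ) : ℝ)))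
          * (a (i + 1) j / b (i + 1) j) →
      a i (j + 1) / b i (j + 1)
        ≤ (((q : ℝ) + ((j + 1 : ℕ) : ℝ)) / ((q : ℝ) + 1 + ((j + 1 : ℕ) : ℝ)))
          * (a (i + 1) (j + 1) / b (i + 1) (j + 1)) := by
    intro i j hC
    have hb1 : 0 < b i (j + 1) := hbpos _ _ (hne2 i j)
    have hb2 : 0 < b (i + 1) j := hbpos _ _ (hne1 i j)
    have hb3 : 0 < b (i + 1) (j + 1) := hbpos _ _ (hne1 i (j + 1))
    have hd : (0:ℝ) < ((q : ℝ) + 1 + ((j + 1 : ℕ) : ℝ)) * b (i + 1) j := by positivity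
    have hd3 : (0:ℝ) < ((q : ℝ) + 1 + ((j + 1 : ℕ) : ℝ)) * b (i + 1) (j + 1) := by positivity
    rw [div_mul_div_comm, div_le_div_iff₀ hb1 hd] at hC
    rw [div_mul_div_comm, div_le_div_iff₀ hb1 hd3]
    have ea := ha (i + 1) (j + 1) (by omega) (by omega)
    have eb := hb (i + 1) (j + 1) (by omega) (by omega)
    simp only [Nat.add_sub_cancel] at ea eb
    rw [ea, eb]
    push_cast at hC ⊢
    nlinarith [hC]
  have main : ∀ n i j : ℕ, i + j = n → (i, j) ≠ (0, 0) →
      a i (j + 1) / b i (j + 1) ≤ a i j / b i j ∧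
        a i j / b i j ≤ (((q : ℝ) + j) / ((q : ℝ) + 1 + j)) * (a (i + 1) j / b (i + 1) j) := by
    intro n
    induction n using Nat.strong_induction_on with
    | _ n ih =>
      intro i j hn hne
      rcases i with _ | i
      · rcases j with _ | j
        · exact absurd rfl hne
        · refine ⟨hinit1 (j + 1) (by omega), hEB 0 j ?_⟩
          rcases j with _ | j
          · exact hC00
          · exact hCstep 0 (j + 1) (by simp)
              (ih (0 + (j + 1)) (by omega) 0 (j + 1) rfl (by simp)).1
              (ih (0 + (j + 1)) (by omega) 0 (j + 1) rfl (by simp)).2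
      · rcases j with _ | j
        · refine ⟨hEA i 0 ?_, by simpa using hinit3 (i + 1) (by omega)⟩
          rcases i with _ | i
          · exact hC00
          · exact hCstep (i + 1) 0 (by simp)
              (ih (i + 1 + 0) (by omega) (i + 1) 0 rfl (by simp)).1
              (ih (i + 1 + 0) (by omega) (i + 1) 0 rfl (by simp)).2
        · exact ⟨hEA i (j + 1) (hCstep i (j + 1) (by simp)
              (ih (i + (j + 1)) (by omega) i (j + 1) rfl (by simp)).1
              (ih (i + (j + 1)) (by omega) i (j + 1) rfl (by simp)).2),
            hEB (i + 1) j (hCstep (i + 1) j (by simp)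
              (ih (i + 1 + j) (by omega) (i + 1) j rfl (by simp)).1
              (ih (i + 1 + j) (by omega) (i + 1) j rfl (by simp)).2)⟩
  intro i j hne
  exact main (i + j) i j rfl hne
end

section
/- For all nonnegative integers p, q, i, j with q ≥ 1, the generalized Eulerian numbers satisfy A_{p,q}(i,j+1)/A_{p,q-1}(i,j+1) ≤ A_{p,q}(i,j)/A_{p,q-1}(i,j) ≤ ((q+j)/(q+1+j))·A_{p,q}(i+1,j)/A_{p,q-1}(i+1,j), where the ratios are taken as real numbers. -/
lemma eulerA_zero_right (p q i : ℕ) : eulerA p q i 0 = (q + 1) ^ i := by cases i <;> simp [eulerA]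

lemma eulerA_zero_left (p q j : ℕ) : eulerA p q 0 j = (p + 1) ^ j := by
  cases j <;> simp [eulerA]

lemma eulerA_rec (p q i j : ℕ) :
    eulerA p q (i + 1) (j + 1) =
      (j + q + 2) * eulerA p q i (j + 1) + (i + p + 2) * eulerA p q (i + 1) j := by
  rw [eulerA]
  ring_nf

lemma eulerA_pos (p q i : ℕ) : ∀ j, 0 < eulerA p q i j := by
  induction i with
  | zero => intro j; rw [eulerA_zero_left]; positivity
  | succ i ih =>
    intro j
    induction j with
    | zero => rw [eulerA_zero_right]; positivity
    | succ j ihj =>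
      rw [eulerA_rec]
      have := ih (j + 1)
      positivity

section
variable (p q' : ℕ)

/-- P i j -/
lemma eulerA_P_of_R (i j : ℕ)
    (hR : (q' + 3 + j) * (eulerA p (q' + 1) i (j + 1) * eulerA p q' (i + 1) j) ≤
      (q' + 2 + j) * (eulerA p (q' + 1) (i + 1) j * eulerA p q' i (j + 1))) :
    eulerA p (q' + 1) (i + 1) (j + 1) * eulerA p q' (i + 1) j ≤
      eulerA p (q' + 1) (i + 1) j * eulerA p q' (i + 1) (j + 1) := by
  rw [eulerA_rec, eulerA_rec]
  nlinarith [hR]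

lemma eulerA_Q_of_R (i j : ℕ)
    (hR : (q' + 3 + j) * (eulerA p (q' + 1) i (j + 1) * eulerA p q' (i + 1) j) ≤
      (q' + 2 + j) * (eulerA p (q' + 1) (i + 1) j * eulerA p q' i (j + 1))) :
    (q' + 2 + (j + 1)) * (eulerA p (q' + 1) i (j + 1) * eulerA p q' (i + 1) (j + 1)) ≤
      (q' + 1 + (j + 1)) * (eulerA p (q' + 1) (i + 1) (j + 1) * eulerA p q' i (j + 1)) := by
  rw [eulerA_rec, eulerA_rec]
  nlinarith [hR, Nat.mul_le_mul_left (i + p + 2) hR]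

lemma eulerA_R (i j : ℕ)
    (hP : eulerA p (q' + 1) i (j + 1) * eulerA p q' i j ≤
      eulerA p (q' + 1) i j * eulerA p q' i (j + 1))
    (hQ : (q' + 2 + j) * (eulerA p (q' + 1) i j * eulerA p q' (i + 1) j) ≤
      (q' + 1 + j) * (eulerA p (q' + 1) (i + 1) j * eulerA p q' i j)) :
    (q' + 3 + j) * (eulerA p (q' + 1) i (j + 1) * eulerA p q' (i + 1) j) ≤
      (q' + 2 + j) * (eulerA p (q' + 1) (i + 1) j * eulerA p q' i (j + 1)) := by
  set A1 := eulerA p (q' + 1) i (j + 1) with hA1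
  set A0 := eulerA p (q' + 1) i j with hA0
  set A0' := eulerA p (q' + 1) (i + 1) j with hA0'
  set B1 := eulerA p q' i (j + 1) with hB1
  set B0 := eulerA p q' i j with hB0
  set B0' := eulerA p q' (i + 1) j with hB0'
  have hB0pos : 0 < B0 := eulerA_pos p q' i j
  have key : (q' + 2 + j) * (A1 * B0') ≤ (q' + 1 + j) * (A0' * B1) := by
    have h := calc
      B0 * ((q' + 2 + j) * (A1 * B0')) = ((q' + 2 + j) * B0') * (A1 * B0) := by ring
      _ ≤ ((q' + 2 + j) * B0') * (A0 * B1) := Nat.mul_le_mul_left _ hP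
      _ = B1 * ((q' + 2 + j) * (A0 * B0')) := by ring
      _ ≤ B1 * ((q' + 1 + j) * (A0' * B0)) := Nat.mul_le_mul_left _ hQ
      _ = B0 * ((q' + 1 + j) * (A0' * B1)) := by ring
    exact Nat.le_of_mul_le_mul_left h hB0pos
  have h2 := calc
    (q' + 2 + j) * ((q' + 3 + j) * (A1 * B0'))
        = (q' + 3 + j) * ((q' + 2 + j) * (A1 * B0')) := by ring
    _ ≤ (q' + 3 + j) * ((q' + 1 + j) * (A0' * B1)) := Nat.mul_le_mul_left _ key
    _ = ((q' + 3 + j) * (q' + 1 + j)) * (A0' * B1) := by ring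
    _ ≤ ((q' + 2 + j) * (q' + 2 + j)) * (A0' * B1) :=
        Nat.mul_le_mul_right _ (by nlinarith)
    _ = (q' + 2 + j) * ((q' + 2 + j) * (A0' * B1)) := by ring
  exact Nat.le_of_mul_le_mul_left h2 (by omega)

lemma eulerA_Q_all (i : ℕ)
    (hP : ∀ j, eulerA p (q' + 1) i (j + 1) * eulerA p q' i j ≤
      eulerA p (q' + 1) i j * eulerA p q' i (j + 1)) :
    ∀ j, (q' + 2 + j) * (eulerA p (q' + 1) i j * eulerA p q' (i + 1) j) ≤
      (q' + 1 + j) * (eulerA p (q' + 1) (i + 1) j * eulerA p q' i j) := by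
  intro j
  induction j with
  | zero =>
    rw [eulerA_zero_right, eulerA_zero_right, eulerA_zero_right, eulerA_zero_right]
    exact le_of_eq (by ring)
  | succ j ihj =>
    exact eulerA_Q_of_R p q' i j (eulerA_R p q' i j (hP j) ihj)

lemma eulerA_PQ : ∀ i, (∀ j, eulerA p (q' + 1) i (j + 1) * eulerA p q' i j ≤
      eulerA p (q' + 1) i j * eulerA p q' i (j + 1)) ∧
    (∀ j, (q' + 2 + j) * (eulerA p (q' + 1) i j * eulerA p q' (i + 1) j) ≤
      (q' + 1 + j) * (eulerA p (q' + 1) (i + 1) j * eulerA p q' i j)) := by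
  intro i
  induction i with
  | zero =>
    have hP : ∀ j, eulerA p (q' + 1) 0 (j + 1) * eulerA p q' 0 j ≤
        eulerA p (q' + 1) 0 j * eulerA p q' 0 (j + 1) := by
      intro j
      rw [eulerA_zero_left, eulerA_zero_left, eulerA_zero_left, eulerA_zero_left]
      exact le_of_eq (by ring)
    exact ⟨hP, eulerA_Q_all p q' 0 hP⟩
  | succ i ih =>
    obtain ⟨hP, hQ⟩ := ih
    have hP' : ∀ j, eulerA p (q' + 1) (i + 1) (j + 1) * eulerA p q' (i + 1) j ≤
        eulerA p (q' + 1) (i + 1) j * eulerA p q' (i + 1) (j + 1) := fun j =>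
      eulerA_P_of_R p q' i j (eulerA_R p q' i j (hP j) (hQ j))
    exact ⟨hP', eulerA_Q_all p q' (i + 1) hP'⟩

end


theorem stmt6 (p q i j : ℕ) (hq : 1 ≤ q) :
    (eulerA p q i (j + 1) : ℝ) / (eulerA p (q - 1) i (j + 1)) ≤
        (eulerA p q i j : ℝ) / (eulerA p (q - 1) i j) ∧
      (eulerA p q i j : ℝ) / (eulerA p (q - 1) i j) ≤
        (((q : ℝ) + j) / ((q : ℝ) + 1 + j)) *
          ((eulerA p q (i + 1) j : ℝ) / (eulerA p (q - 1) (i + 1) j)) := by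
  obtain ⟨q', rfl⟩ : ∃ q', q = q' + 1 := ⟨q - 1, by omega⟩
  simp only [Nat.add_sub_cancel]
  obtain ⟨hP, hQ⟩ := eulerA_PQ p q' i
  have b0 : (0 : ℝ) < eulerA p q' i j := by exact_mod_cast eulerA_pos p q' i j
  have b1 : (0 : ℝ) < eulerA p q' i (j + 1) := by exact_mod_cast eulerA_pos p q' i (j + 1)
  have b0' : (0 : ℝ) < eulerA p q' (i + 1) j := by exact_mod_cast eulerA_pos p q' (i + 1) j
  constructor
  · rw [div_le_div_iff₀ b1 b0]
    exact_mod_cast hP j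
  · have hQj := hQ j
    have hQR : ((q' + 2 + j : ℕ) : ℝ) * (eulerA p (q' + 1) i j * eulerA p q' (i + 1) j) ≤
        ((q' + 1 + j : ℕ) : ℝ) * (eulerA p (q' + 1) (i + 1) j * eulerA p q' i j) := by
      exact_mod_cast hQj
    push_cast at hQR
    rw [div_mul_div_comm, div_le_div_iff₀ b0 (by positivity)]
    push_cast
    nlinarith [hQR]
end
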